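/- Let Q be the character table of a finite group G with g_1 = identity. Then the matrix Q D_{e_1} Q⁻¹ is entrywise strictly positive; specifically, its (i,j)-entry equals dim(ρ_i)·dim(ρ_j)/|G|. In particular, Q is a Perron similarity. -/

import Mathlib

open scoped ComplexOrder
open CategoryTheory

/-- The character table of a finite group: rows indexed by (irreducible) representations,
columns by conjugacy-class representatives. -/
noncomputable def charTable {G : Type} [Group G] {n : ℕ}
    (ρ : Fin n → FDRep ℂ G) (g : Fin n → G) : Matrix (Fin n) (Fin n) ℂ :=
  Matrix.of fun i j => (ρ i).character (g j)

/-- Irreducibility of a square matrix (no nontrivial invariant coordinate subset). -/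
def MatrixIrred {n : ℕ} (A : Matrix (Fin n) (Fin n) ℂ) : Prop :=
  ∀ s : Set (Fin n), s.Nonempty → s ≠ Set.univ → ∃ i ∈ s, ∃ j, j ∉ s ∧ A i j ≠ 0

theorem stmt7 {G : Type} [Group G] [Fintype G] {n : ℕ}
    (ρ : Fin n → FDRep ℂ G)
    (hsimple : ∀ i, Simple (ρ i))
    (hdistinct : ∀ i j, Nonempty (ρ i ≅ ρ j) → i = j)
    (hcomplete : ∀ V : FDRep ℂ G, Simple V → ∃ i, Nonempty (V ≅ ρ i))
    (g : Fin n → G)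
    (hgdist : ∀ i j, IsConj (g i) (g j) → i = j)
    (hgall : ∀ h : G, ∃ i, IsConj h (g i)) (i0 : Fin n) (hg0 : g i0 = 1) :
    (∀ i j, (charTable ρ g * Matrix.diagonal (Pi.single i0 (1 : ℂ)) * (charTable ρ g)⁻¹) i j =
        ((Module.finrank ℂ (ρ i) : ℂ) * (Module.finrank ℂ (ρ j) : ℂ)) / (Fintype.card G : ℂ)) ∧
      (∀ i j, 0 < (charTable ρ g * Matrix.diagonal (Pi.single i0 (1 : ℂ)) * (charTable ρ g)⁻¹) i j) ∧
      (IsUnit (charTable ρ g) ∧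
        ∃ d : Fin n → ℂ,
          (∀ i j, 0 ≤ (charTable ρ g * Matrix.diagonal d * (charTable ρ g)⁻¹) i j) ∧
            MatrixIrred (charTable ρ g * Matrix.diagonal d * (charTable ρ g)⁻¹)) := by
  classical
  set Q := charTable ρ g with hQdef
  -- index of the conjugacy class of an element
  set idx : G → Fin n := fun h => (hgall h).choose with hidxdef
  have hidx : ∀ h : G, IsConj h (g (idx h)) := fun h => (hgall h).choose_spec
  have huniq : ∀ (h : G) (j : Fin n), IsConj h (g j) → idx h = j := fun h j hc =>
    hgdist _ _ ((hidx h).symm.trans hc)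
  -- characters are class functions
  have hchar : ∀ (V : FDRep ℂ G) (a b : G), IsConj a b → V.character a = V.character b := by
    intro V a b h
    obtain ⟨c, hc⟩ := isConj_iff.mp h
    rw [← hc, FDRep.char_conj]
  have hconjinv : ∀ a b : G, IsConj a b → IsConj a⁻¹ b⁻¹ := by
    intro a b h
    obtain ⟨c, hc⟩ := isConj_iff.mp h
    exact isConj_iff.mpr ⟨c, by rw [← hc]; group⟩
  have hcardG : (0 : ℂ) < (Fintype.card G : ℂ) := by
    have : (0:ℝ) < (Fintype.card G : ℝ) := by positivity
    exact_mod_cast Complex.zero_lt_real.mpr this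
  have hcardne : (Fintype.card G : ℂ) ≠ 0 := hcardG.ne'
  -- right inverse of the character table
  set B : Matrix (Fin n) (Fin n) ℂ := Matrix.of fun j k =>
    ((Finset.univ.filter fun h : G => idx h = j).card : ℂ) / (Fintype.card G : ℂ)
      * (ρ k).character ((g j)⁻¹) with hBdef
  have hQB : Q * B = 1 := by
    ext i k
    haveI := hsimple i; haveI := hsimple k
    letI : Invertible ((Fintype.card G : ℂ)) := invertibleOfNonzero hcardne
    have horth := FDRep.char_orthonormal (ρ i) (ρ k)
    have key : ∀ j : Fin n,
        ∑ h ∈ Finset.univ.filter (fun h : G => idx h = j),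
          (ρ i).character h * (ρ k).character h⁻¹
        = ((Finset.univ.filter fun h : G => idx h = j).card : ℂ)
          * ((ρ i).character (g j) * (ρ k).character (g j)⁻¹) := by
      intro j
      rw [Finset.sum_congr rfl (fun h hh => ?_), Finset.sum_const, nsmul_eq_mul]
      simp only [Finset.mem_filter, Finset.mem_univ, true_and] at hh
      have hc : IsConj h (g j) := hh ▸ hidx h
      rw [hchar (ρ i) h (g j) hc, hchar (ρ k) h⁻¹ (g j)⁻¹ (hconjinv _ _ hc)]
    have hfib : ∑ j : Fin n, ∑ h ∈ Finset.univ.filter (fun h : G => idx h = j),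
          (ρ i).character h * (ρ k).character h⁻¹
        = ∑ h : G, (ρ i).character h * (ρ k).character h⁻¹ :=
      Finset.sum_fiberwise_of_maps_to (fun h _ => Finset.mem_univ (idx h)) _
    have hsum : ∑ j : Fin n, Q i j * B j k
        = (Fintype.card G : ℂ)⁻¹ * ∑ h : G, (ρ i).character h * (ρ k).character h⁻¹ := by
      rw [← hfib, Finset.mul_sum]
      refine Finset.sum_congr rfl fun j _ => ?_
      rw [key j]
      simp only [hQdef, hBdef, charTable, Matrix.of_apply]
      ring
    rw [Matrix.mul_apply, hsum]
    rw [Nat.card_eq_fintype_card (α := G)] at horth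
    have horth' : (↑(Fintype.card G) : ℂ)⁻¹ * ∑ h : G, (ρ i).character h * (ρ k).character h⁻¹
        = if Nonempty (ρ i ≅ ρ k) then 1 else 0 := horth
    rw [horth', Matrix.one_apply]
    by_cases h : i = k
    · subst h; simp
    · rw [if_neg h, if_neg (by exact fun hne => h (hdistinct i k hne) : ¬ Nonempty (ρ i ≅ ρ k))]
  have hunit : IsUnit Q := by
    rw [Matrix.isUnit_iff_isUnit_det]
    exact IsUnit.of_mul_eq_one B.det (by rw [← Matrix.det_mul, hQB, Matrix.det_one])
  have hQinv : Q⁻¹ = B := Matrix.inv_eq_right_inv hQB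
  -- positivity of ranks
  have hrank : ∀ i, 0 < Module.finrank ℂ (ρ i) := by
    intro i
    rcases Nat.eq_zero_or_pos (Module.finrank ℂ (ρ i)) with h0 | h
    · exfalso
      haveI : Subsingleton (ρ i) := (Module.finrank_zero_iff (R := ℂ) (M := ρ i)).mp h0
      have hz : ∀ h : G, (ρ i).character h = 0 := by
        intro h
        have : (ρ i).ρ h = 0 := Subsingleton.elim _ _
        simp [FDRep.character, this]
      have hdet : Q.det = 0 := Matrix.det_eq_zero_of_row_eq_zero i (fun j => hz (g j))
      have := Matrix.isUnit_iff_isUnit_det Q |>.mp hunit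
      rw [hdet] at this
      exact (by simp : ¬ IsUnit (0:ℂ)) this
    · exact h
  -- the fiber over i0 is {1}
  have hfil : (Finset.univ.filter fun h : G => idx h = i0) = {1} := by
    ext h
    simp only [Finset.mem_filter, Finset.mem_univ, true_and, Finset.mem_singleton]
    constructor
    · intro hh
      have hc := hidx h
      rw [hh, hg0] at hc
      exact isConj_one_left.mp hc
    · rintro rfl
      exact huniq 1 i0 (by rw [hg0])
  -- entry formula
  have hentry : ∀ i j, (Q * Matrix.diagonal (Pi.single i0 (1 : ℂ)) * Q⁻¹) i j =
      ((Module.finrank ℂ (ρ i) : ℂ) * (Module.finrank ℂ (ρ j) : ℂ)) / (Fintype.card G : ℂ) := by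
    intro i j
    rw [hQinv, Matrix.mul_apply]
    rw [Finset.sum_eq_single i0 (fun l _ hl => by
      rw [Matrix.mul_diagonal, Pi.single_eq_of_ne hl]; ring) (fun h => absurd (Finset.mem_univ i0) h)]
    rw [Matrix.mul_diagonal, Pi.single_eq_same, mul_one]
    simp only [hQdef, hBdef, charTable, Matrix.of_apply]
    rw [hfil, hg0]
    simp [FDRep.char_one]
    ring
  have hpos : ∀ i j, 0 < (Q * Matrix.diagonal (Pi.single i0 (1 : ℂ)) * Q⁻¹) i j := by
    intro i j
    rw [hentry i j]
    have h1 := hrank i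
    have h2 := hrank j
    have h3 : (0:ℕ) < Fintype.card G := Fintype.card_pos
    rw [show ((Module.finrank ℂ (ρ i) : ℂ) * (Module.finrank ℂ (ρ j) : ℂ)) / (Fintype.card G : ℂ)
        = (((Module.finrank ℂ (ρ i) * Module.finrank ℂ (ρ j) : ℝ) / (Fintype.card G : ℝ) : ℝ) : ℂ) by
      push_cast; ring]
    rw [Complex.zero_lt_real]
    positivity
  refine ⟨hentry, hpos, hunit, Pi.single i0 1, fun i j => (hpos i j).le, ?_⟩
  intro s hs hsne
  obtain ⟨i, hi⟩ := hs
  obtain ⟨j, hj⟩ : ∃ j, j ∉ s := by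
    by_contra h
    push_neg at h
    exact hsne (Set.eq_univ_of_forall h)
  exact ⟨i, hi, j, hj, (hpos i j).ne'⟩
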